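/- Let R = ((ℓ_1,…,ℓ_d),(u_1,…,u_{d+1})) be a constructible special point data of level d with q nodes, with u_1, …, u_{d+1} listed in increasing lexicographic order, and let c be a rational number. Define b_j := ⌈(|a_{u_j}(R)| + c)/q − 1/2⌉ for j = 1,…,d+1. Then there exist indices h_min, h_max ∈ {1,…,d+1} such that for every node label ℓ ∈ {1,…,q} and every j ∈ {1,…,d+1} one has a^ℓ_{u_{h_min}}(R) − b_{h_min} ≤ a^ℓ_{u_j}(R) − b_j ≤ a^ℓ_{u_{h_max}}(R) − b_{h_max}. In particular, the minimum and the maximum of the function F(j_1,…,j_q) = Σ_{ℓ=1}^q (a^ℓ_{u_{j_ℓ}}(R) − b_{j_ℓ}) over all functions j : {1,…,q} → {1,…,d+1} are attained at the constant functions (h_min,…,h_min) and (h_max,…,h_max) respectively. -/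
import Mathlib


/-- The relation `u <_ℓ u'` on `{1,2}^d`, relative to node labels `lab : Fin d → ℕ`. -/
def ltNode {d : ℕ} (lab : Fin d → ℕ) (ℓ : ℕ) (u u' : Fin d → ℕ) : Prop :=
  (∃ k₀ : Fin d, lab k₀ = ℓ ∧ u k₀ = 2 ∧ u' k₀ = 1 ∧
      ∀ k : Fin d, k₀ < k → lab k = ℓ → u k = u' k) ∨
  ((∀ k : Fin d, lab k = ℓ → u k = u' k) ∧
    ∃ k₀ : Fin d, lab k₀ ≠ ℓ ∧ u k₀ = 1 ∧ u' k₀ = 2 ∧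
      ∀ k : Fin d, k < k₀ → u k = u' k)

/-- Constructible special point data of level `d` with `q` nodes. -/
inductive Constructible (q : ℕ) :
    (d : ℕ) → (Fin d → ℕ) → (Fin (d + 1) → Fin d → ℕ) → Prop
  | base (ℓ : ℕ) (h1 : 1 ≤ ℓ) (hq : ℓ ≤ q) :
      Constructible q 1 (fun _ => ℓ) ![![1], ![2]]
  | step {d : ℕ} {lab : Fin d → ℕ} {u : Fin (d + 1) → Fin d → ℕ}
      (hR : Constructible q d lab u) (ℓ : ℕ) (h1 : 1 ≤ ℓ) (hq : ℓ ≤ q)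
      (v : Fin (d + 1) → Fin d → ℕ) (σ : Equiv.Perm (Fin (d + 1)))
      (hv : ∀ j, v j = u (σ j))
      (hsort : ∀ i j : Fin (d + 1), i < j → ltNode lab ℓ (v i) (v j))
      (h : ℕ) (hh1 : 1 ≤ h) (hh2 : h ≤ d + 1) :
      Constructible q (d + 1) (Fin.snoc lab ℓ)
        (fun j : Fin (d + 2) =>
          if hj : (j : ℕ) < h then Fin.snoc (v ⟨(j : ℕ), by omega⟩) 1
          else Fin.snoc (v ⟨(j : ℕ) - 1, by omega⟩) 2)

/-- `a^ℓ_u(R)`: the number of `k` with `ℓ_k = ℓ` and `u(k) = 2`. -/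
def aCount {d : ℕ} (lab : Fin d → ℕ) (ℓ : ℕ) (u : Fin d → ℕ) : ℕ :=
  (Finset.univ.filter (fun k : Fin d => lab k = ℓ ∧ u k = 2)).card

/-- `|a_u(R)|`: the number of `k` with `u(k) = 2`. -/
def aTot {d : ℕ} (u : Fin d → ℕ) : ℕ :=
  (Finset.univ.filter (fun k : Fin d => u k = 2)).card

/-- Lexicographic order on tuples, comparing at the smallest coordinate where they differ. -/
def lexLt {d : ℕ} (u u' : Fin d → ℕ) : Prop :=
  ∃ k₀ : Fin d, (∀ k : Fin d, k < k₀ → u k = u' k) ∧ u k₀ < u' k₀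

lemma ltNode_irrefl {d : ℕ} (lab : Fin d → ℕ) (ℓ : ℕ) (x : Fin d → ℕ) :
    ¬ ltNode lab ℓ x x := by
  rintro (⟨k₀, -, h2, h3, -⟩ | ⟨-, k₀, -, h2, h3, -⟩) <;> omega

/-- The key invariant carried through the construction. -/
def SpInv (q : ℕ) {d n : ℕ} (lab : Fin d → ℕ) (u : Fin n → Fin d → ℕ) : Prop :=
  ∀ i j : Fin n, ∀ ℓ ℓ' : ℕ, 1 ≤ ℓ → ℓ ≤ q → 1 ≤ ℓ' → ℓ' ≤ q →
    (((aCount lab ℓ (u i) : ℤ) - (aCount lab ℓ (u j) : ℤ)) ≤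
       ((aCount lab ℓ' (u i) : ℤ) - (aCount lab ℓ' (u j) : ℤ)) + 1) ∧
    (ltNode lab ℓ (u i) (u j) →
      ((aCount lab ℓ' (u i) : ℤ) - (aCount lab ℓ' (u j) : ℤ)) ≤
        ((aCount lab ℓ (u i) : ℤ) - (aCount lab ℓ (u j) : ℤ))) ∧
    (ltNode lab ℓ (u i) (u j) → ltNode lab ℓ' (u j) (u i) →
      ((aCount lab ℓ' (u i) : ℤ) - (aCount lab ℓ' (u j) : ℤ)) <
        ((aCount lab ℓ (u i) : ℤ) - (aCount lab ℓ (u j) : ℤ)))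

lemma aCount_snoc {d : ℕ} (lab : Fin d → ℕ) (a ℓ : ℕ) (v : Fin d → ℕ) (e : ℕ) :
    aCount (Fin.snoc lab a) ℓ (Fin.snoc v e) =
      aCount lab ℓ v + (if a = ℓ ∧ e = 2 then 1 else 0) := by
  rw [aCount, aCount, Finset.card_filter, Finset.card_filter, Fin.sum_univ_castSucc]
  simp only [Fin.snoc_castSucc, Fin.snoc_last]

lemma aCount_snoc_one {d : ℕ} (lab : Fin d → ℕ) (a ℓ : ℕ) (v : Fin d → ℕ) :
    aCount (Fin.snoc lab a) ℓ (Fin.snoc v 1) = aCount lab ℓ v := by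
  rw [aCount_snoc]; simp

lemma aCount_snoc_two_self {d : ℕ} (lab : Fin d → ℕ) {a ℓ : ℕ} (hal : a = ℓ)
    (v : Fin d → ℕ) :
    aCount (Fin.snoc lab a) ℓ (Fin.snoc v 2) = aCount lab ℓ v + 1 := by
  rw [aCount_snoc]; simp [hal]

lemma aCount_snoc_two_ne {d : ℕ} (lab : Fin d → ℕ) {a ℓ : ℕ} (hal : ¬ a = ℓ)
    (v : Fin d → ℕ) :
    aCount (Fin.snoc lab a) ℓ (Fin.snoc v 2) = aCount lab ℓ v := by
  rw [aCount_snoc]; simp [hal]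

lemma ltNode_snoc {d : ℕ} {lab : Fin d → ℕ} {a ℓ : ℕ} {x y : Fin d → ℕ} {e f : ℕ}
    (H : ltNode (Fin.snoc lab a) ℓ (Fin.snoc x e) (Fin.snoc y f)) :
    (ℓ = a ∧ e = 2 ∧ f = 1) ∨
    (ℓ = a ∧ e = f ∧ ltNode lab a x y) ∨
    (ℓ ≠ a ∧ ltNode lab ℓ x y) ∨
    (ℓ ≠ a ∧ x = y ∧ e = 1 ∧ f = 2) := by
  rcases H with ⟨k₀, hk1, hk2, hk3, hk4⟩ | ⟨hall, k₀, hk1, hk2, hk3, hk4⟩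
  · rcases Fin.eq_castSucc_or_eq_last k₀ with ⟨k, rfl⟩ | rfl
    · rw [Fin.snoc_castSucc] at hk1 hk2 hk3
      have hsuffix : ∀ k' : Fin d, k < k' → lab k' = ℓ → x k' = y k' := by
        intro k' hlt hl
        have := hk4 k'.castSucc (by exact (Fin.castSucc_lt_castSucc_iff).2 hlt)
          (by rw [Fin.snoc_castSucc]; exact hl)
        rwa [Fin.snoc_castSucc, Fin.snoc_castSucc] at this
      by_cases hla : ℓ = a
      · have hef : e = f := by
          have := hk4 (Fin.last d) (Fin.castSucc_lt_last k)
            (by rw [Fin.snoc_last, hla])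
          rwa [Fin.snoc_last, Fin.snoc_last] at this
        subst hla
        exact Or.inr (Or.inl ⟨rfl, hef, Or.inl ⟨k, hk1, hk2, hk3, hsuffix⟩⟩)
      · exact Or.inr (Or.inr (Or.inl ⟨hla, Or.inl ⟨k, hk1, hk2, hk3, hsuffix⟩⟩))
    · rw [Fin.snoc_last] at hk1 hk2 hk3
      exact Or.inl ⟨hk1.symm, hk2, hk3⟩
  · have hallold : ∀ k : Fin d, lab k = ℓ → x k = y k := by
      intro k hl
      have := hall k.castSucc (by rw [Fin.snoc_castSucc]; exact hl)
      rwa [Fin.snoc_castSucc, Fin.snoc_castSucc] at this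
    rcases Fin.eq_castSucc_or_eq_last k₀ with ⟨k, rfl⟩ | rfl
    · rw [Fin.snoc_castSucc] at hk1 hk2 hk3
      have hpre : ∀ k' : Fin d, k' < k → x k' = y k' := by
        intro k' hlt
        have := hk4 k'.castSucc ((Fin.castSucc_lt_castSucc_iff).2 hlt)
        rwa [Fin.snoc_castSucc, Fin.snoc_castSucc] at this
      by_cases hla : ℓ = a
      · have hef : e = f := by
          have := hall (Fin.last d) (by rw [Fin.snoc_last, hla])
          rwa [Fin.snoc_last, Fin.snoc_last] at this
        subst hla
        exact Or.inr (Or.inl ⟨rfl, hef, Or.inr ⟨hallold, k, hk1, hk2, hk3, hpre⟩⟩)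
      · exact Or.inr (Or.inr (Or.inl ⟨hla, Or.inr ⟨hallold, k, hk1, hk2, hk3, hpre⟩⟩))
    · rw [Fin.snoc_last] at hk1 hk2 hk3
      have hxy : x = y := funext fun k => by
        have := hk4 k.castSucc (Fin.castSucc_lt_last k)
        rwa [Fin.snoc_castSucc, Fin.snoc_castSucc] at this
      exact Or.inr (Or.inr (Or.inr ⟨fun hEq => hk1 (by rw [hEq]), hxy, hk2, hk3⟩))

lemma step_core {q d : ℕ} {lab : Fin d → ℕ} {v : Fin (d + 1) → Fin d → ℕ} {a : ℕ}
    (ha1 : 1 ≤ a) (haq : a ≤ q)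
    (ihv : SpInv q lab v)
    (i₁ i₂ : Fin (d + 1)) (e₁ e₂ : ℕ)
    (he₁ : e₁ = 1 ∨ e₁ = 2) (he₂ : e₂ = 1 ∨ e₂ = 2)
    (h12 : e₁ = 1 → e₂ = 2 → (v i₁ = v i₂ ∨ ltNode lab a (v i₁) (v i₂)))
    (h21 : e₁ = 2 → e₂ = 1 → (v i₁ = v i₂ ∨ ltNode lab a (v i₂) (v i₁)))
    (ℓ ℓ' : ℕ) (hℓ1 : 1 ≤ ℓ) (hℓ2 : ℓ ≤ q) (hℓ'1 : 1 ≤ ℓ') (hℓ'2 : ℓ' ≤ q) :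
    (((aCount (Fin.snoc lab a) ℓ (Fin.snoc (v i₁) e₁) : ℤ) -
        (aCount (Fin.snoc lab a) ℓ (Fin.snoc (v i₂) e₂) : ℤ)) ≤
      ((aCount (Fin.snoc lab a) ℓ' (Fin.snoc (v i₁) e₁) : ℤ) -
        (aCount (Fin.snoc lab a) ℓ' (Fin.snoc (v i₂) e₂) : ℤ)) + 1) ∧
    (ltNode (Fin.snoc lab a) ℓ (Fin.snoc (v i₁) e₁) (Fin.snoc (v i₂) e₂) →
      ((aCount (Fin.snoc lab a) ℓ' (Fin.snoc (v i₁) e₁) : ℤ) -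
        (aCount (Fin.snoc lab a) ℓ' (Fin.snoc (v i₂) e₂) : ℤ)) ≤
      ((aCount (Fin.snoc lab a) ℓ (Fin.snoc (v i₁) e₁) : ℤ) -
        (aCount (Fin.snoc lab a) ℓ (Fin.snoc (v i₂) e₂) : ℤ))) ∧
    (ltNode (Fin.snoc lab a) ℓ (Fin.snoc (v i₁) e₁) (Fin.snoc (v i₂) e₂) →
      ltNode (Fin.snoc lab a) ℓ' (Fin.snoc (v i₂) e₂) (Fin.snoc (v i₁) e₁) →
      ((aCount (Fin.snoc lab a) ℓ' (Fin.snoc (v i₁) e₁) : ℤ) -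
        (aCount (Fin.snoc lab a) ℓ' (Fin.snoc (v i₂) e₂) : ℤ)) <
      ((aCount (Fin.snoc lab a) ℓ (Fin.snoc (v i₁) e₁) : ℤ) -
        (aCount (Fin.snoc lab a) ℓ (Fin.snoc (v i₂) e₂) : ℤ))) := by
  have key11 : ∀ (b : ℕ) (x y : Fin d → ℕ),
      (aCount (Fin.snoc lab a) b (Fin.snoc x 1) : ℤ) -
        (aCount (Fin.snoc lab a) b (Fin.snoc y 1) : ℤ) =
      (aCount lab b x : ℤ) - (aCount lab b y : ℤ) := by
    intro b x y; rw [aCount_snoc, aCount_snoc]; push_cast; ring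
  have key22 : ∀ (b : ℕ) (x y : Fin d → ℕ),
      (aCount (Fin.snoc lab a) b (Fin.snoc x 2) : ℤ) -
        (aCount (Fin.snoc lab a) b (Fin.snoc y 2) : ℤ) =
      (aCount lab b x : ℤ) - (aCount lab b y : ℤ) := by
    intro b x y; rw [aCount_snoc, aCount_snoc]; push_cast; ring
  have key12 : ∀ (b : ℕ) (x y : Fin d → ℕ),
      (aCount (Fin.snoc lab a) b (Fin.snoc x 1) : ℤ) -
        (aCount (Fin.snoc lab a) b (Fin.snoc y 2) : ℤ) =
      (aCount lab b x : ℤ) - (aCount lab b y : ℤ) -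
        (if a = b then (1 : ℤ) else 0) := by
    intro b x y
    rw [aCount_snoc, aCount_snoc, if_neg (by omega : ¬(a = b ∧ 1 = 2))]
    by_cases hab : a = b
    · rw [if_pos ⟨hab, rfl⟩, if_pos hab]; push_cast; ring
    · rw [if_neg (fun hc => hab hc.1), if_neg hab]; push_cast; ring
  have key21 : ∀ (b : ℕ) (x y : Fin d → ℕ),
      (aCount (Fin.snoc lab a) b (Fin.snoc x 2) : ℤ) -
        (aCount (Fin.snoc lab a) b (Fin.snoc y 1) : ℤ) =
      (aCount lab b x : ℤ) - (aCount lab b y : ℤ) +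
        (if a = b then (1 : ℤ) else 0) := by
    intro b x y
    rw [aCount_snoc, aCount_snoc, if_neg (by omega : ¬(a = b ∧ 1 = 2))]
    by_cases hab : a = b
    · rw [if_pos ⟨hab, rfl⟩, if_pos hab]; push_cast; ring
    · rw [if_neg (fun hc => hab hc.1), if_neg hab]; push_cast; ring
  have P1a := (ihv i₁ i₂ ℓ ℓ' hℓ1 hℓ2 hℓ'1 hℓ'2).1
  have P1f := (ihv i₁ i₂ ℓ' a hℓ'1 hℓ'2 ha1 haq).1
  have P1b := (ihv i₁ i₂ ℓ' ℓ hℓ'1 hℓ'2 hℓ1 hℓ2).1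
  have P1c := (ihv i₁ i₂ a ℓ' ha1 haq hℓ'1 hℓ'2).1
  have P1d := (ihv i₁ i₂ a ℓ ha1 haq hℓ1 hℓ2).1
  have P1e := (ihv i₁ i₂ ℓ a hℓ1 hℓ2 ha1 haq).1
  rcases he₁ with rfl | rfl <;> rcases he₂ with rfl | rfl
  · -- e₁ = 1, e₂ = 1
    simp only [key11]
    refine ⟨P1a, ?_, ?_⟩
    · intro H
      rcases ltNode_snoc H with ⟨-, h2, -⟩ | ⟨rfl, -, T⟩ | ⟨-, T⟩ | ⟨-, -, -, h2⟩
      · omega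
      · exact (ihv i₁ i₂ ℓ ℓ' hℓ1 hℓ2 hℓ'1 hℓ'2).2.1 T
      · exact (ihv i₁ i₂ ℓ ℓ' hℓ1 hℓ2 hℓ'1 hℓ'2).2.1 T
      · omega
    · intro H1 H2
      have T1 : ltNode lab ℓ (v i₁) (v i₂) := by
        rcases ltNode_snoc H1 with ⟨-, h2, -⟩ | ⟨rfl, -, T⟩ | ⟨-, T⟩ | ⟨-, -, -, h2⟩
        · omega
        · exact T
        · exact T
        · omega
      have T2 : ltNode lab ℓ' (v i₂) (v i₁) := by
        rcases ltNode_snoc H2 with ⟨-, h2, -⟩ | ⟨rfl, -, T⟩ | ⟨-, T⟩ | ⟨-, -, -, h2⟩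
        · omega
        · exact T
        · exact T
        · omega
      exact (ihv i₁ i₂ ℓ ℓ' hℓ1 hℓ2 hℓ'1 hℓ'2).2.2 T1 T2
  · -- e₁ = 1, e₂ = 2
    have horder := h12 rfl rfl
    simp only [key12]
    have hIl : ((if a = ℓ then (1:ℤ) else 0) = 1 ∧ a = ℓ ∧
          (aCount lab a (v i₁) : ℤ) = (aCount lab ℓ (v i₁) : ℤ) ∧
          (aCount lab a (v i₂) : ℤ) = (aCount lab ℓ (v i₂) : ℤ)) ∨
        ((if a = ℓ then (1:ℤ) else 0) = 0 ∧ ¬ a = ℓ) := by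
      by_cases hal : a = ℓ <;> simp [hal]
    have hIl' : ((if a = ℓ' then (1:ℤ) else 0) = 1 ∧ a = ℓ' ∧
          (aCount lab a (v i₁) : ℤ) = (aCount lab ℓ' (v i₁) : ℤ) ∧
          (aCount lab a (v i₂) : ℤ) = (aCount lab ℓ' (v i₂) : ℤ)) ∨
        ((if a = ℓ' then (1:ℤ) else 0) = 0 ∧ ¬ a = ℓ') := by
      by_cases hal : a = ℓ' <;> simp [hal]
    obtain ⟨I1, hg1⟩ : ∃ t : ℤ, (if a = ℓ then (1:ℤ) else 0) = t := ⟨_, rfl⟩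
    obtain ⟨I2, hg2⟩ : ∃ t : ℤ, (if a = ℓ' then (1:ℤ) else 0) = t := ⟨_, rfl⟩
    rw [hg1] at hIl
    rw [hg2] at hIl'
    rw [hg1, hg2]
    rcases horder with hveq | S
    · have hq1 : aCount lab ℓ (v i₁) = aCount lab ℓ (v i₂) := by rw [hveq]
      have hq2 : aCount lab ℓ' (v i₁) = aCount lab ℓ' (v i₂) := by rw [hveq]
      refine ⟨by omega, ?_, ?_⟩
      · intro H
        rcases ltNode_snoc H with ⟨-, h2, -⟩ | ⟨-, h2, -⟩ | ⟨hNe, T⟩ | ⟨hNe, -, -, -⟩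
        · omega
        · omega
        · rw [hveq] at T; exact absurd T (ltNode_irrefl _ _ _)
        · omega
      · intro H1 H2
        rcases ltNode_snoc H1 with ⟨-, h2, -⟩ | ⟨-, h2, -⟩ | ⟨hNe, T⟩ | ⟨hNe, -, -, -⟩
        · omega
        · omega
        · rw [hveq] at T; exact absurd T (ltNode_irrefl _ _ _)
        · rcases ltNode_snoc H2 with ⟨rfl, -, -⟩ | ⟨-, h2, -⟩ | ⟨-, T2⟩ | ⟨-, -, h2, -⟩
          · omega
          · omega
          · rw [hveq] at T2; exact absurd T2 (ltNode_irrefl _ _ _)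
          · omega
    · have m1 := (ihv i₁ i₂ a ℓ ha1 haq hℓ1 hℓ2).2.1 S
      have m2 := (ihv i₁ i₂ a ℓ' ha1 haq hℓ'1 hℓ'2).2.1 S
      refine ⟨by omega, ?_, ?_⟩
      · intro H
        rcases ltNode_snoc H with ⟨-, h2, -⟩ | ⟨-, h2, -⟩ | ⟨hNe, T⟩ | ⟨-, hveq, -, -⟩
        · omega
        · omega
        · have n1 := (ihv i₁ i₂ ℓ ℓ' hℓ1 hℓ2 hℓ'1 hℓ'2).2.1 T
          have n2 := (ihv i₁ i₂ ℓ a hℓ1 hℓ2 ha1 haq).2.1 T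
          omega
        · rw [hveq] at S; exact absurd S (ltNode_irrefl _ _ _)
      · intro H1 H2
        rcases ltNode_snoc H1 with ⟨-, h2, -⟩ | ⟨-, h2, -⟩ | ⟨hNe, T1⟩ | ⟨-, hveq, -, -⟩
        · omega
        · omega
        · rcases ltNode_snoc H2 with ⟨rfl, -, -⟩ | ⟨-, h2, -⟩ | ⟨hNe', T2⟩ | ⟨-, -, h2, -⟩
          · have n2 := (ihv i₁ i₂ ℓ ℓ' hℓ1 hℓ2 hℓ'1 hℓ'2).2.1 T1
            omega
          · omega
          · have n3 := (ihv i₁ i₂ ℓ ℓ' hℓ1 hℓ2 hℓ'1 hℓ'2).2.2 T1 T2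
            omega
          · omega
        · rw [hveq] at S; exact absurd S (ltNode_irrefl _ _ _)
  · -- e₁ = 2, e₂ = 1
    have horder := h21 rfl rfl
    simp only [key21]
    have hIl : ((if a = ℓ then (1:ℤ) else 0) = 1 ∧ a = ℓ ∧
          (aCount lab a (v i₁) : ℤ) = (aCount lab ℓ (v i₁) : ℤ) ∧
          (aCount lab a (v i₂) : ℤ) = (aCount lab ℓ (v i₂) : ℤ)) ∨
        ((if a = ℓ then (1:ℤ) else 0) = 0 ∧ ¬ a = ℓ) := by
      by_cases hal : a = ℓ <;> simp [hal]
    have hIl' : ((if a = ℓ' then (1:ℤ) else 0) = 1 ∧ a = ℓ' ∧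
          (aCount lab a (v i₁) : ℤ) = (aCount lab ℓ' (v i₁) : ℤ) ∧
          (aCount lab a (v i₂) : ℤ) = (aCount lab ℓ' (v i₂) : ℤ)) ∨
        ((if a = ℓ' then (1:ℤ) else 0) = 0 ∧ ¬ a = ℓ') := by
      by_cases hal : a = ℓ' <;> simp [hal]
    obtain ⟨I1, hg1⟩ : ∃ t : ℤ, (if a = ℓ then (1:ℤ) else 0) = t := ⟨_, rfl⟩
    obtain ⟨I2, hg2⟩ : ∃ t : ℤ, (if a = ℓ' then (1:ℤ) else 0) = t := ⟨_, rfl⟩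
    rw [hg1] at hIl
    rw [hg2] at hIl'
    rw [hg1, hg2]
    rcases horder with hveq | S
    · have hq1 : aCount lab ℓ (v i₁) = aCount lab ℓ (v i₂) := by rw [hveq]
      have hq2 : aCount lab ℓ' (v i₁) = aCount lab ℓ' (v i₂) := by rw [hveq]
      refine ⟨by omega, ?_, ?_⟩
      · intro H
        rcases ltNode_snoc H with ⟨rfl, -, -⟩ | ⟨-, h2, -⟩ | ⟨hNe, T⟩ | ⟨-, -, h2, -⟩
        · omega
        · omega
        · rw [hveq] at T; exact absurd T (ltNode_irrefl _ _ _)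
        · omega
      · intro H1 H2
        rcases ltNode_snoc H1 with ⟨rfl, -, -⟩ | ⟨-, h2, -⟩ | ⟨hNe, T⟩ | ⟨-, -, h2, -⟩
        · rcases ltNode_snoc H2 with ⟨-, h2, -⟩ | ⟨-, h2, -⟩ | ⟨hNe', T2⟩ | ⟨hNe', -, -, -⟩
          · omega
          · omega
          · rw [hveq] at T2; exact absurd T2 (ltNode_irrefl _ _ _)
          · omega
        · omega
        · rw [hveq] at T; exact absurd T (ltNode_irrefl _ _ _)
        · omega
    · have m1' := (ihv i₂ i₁ a ℓ ha1 haq hℓ1 hℓ2).2.1 S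
      have m2' := (ihv i₂ i₁ a ℓ' ha1 haq hℓ'1 hℓ'2).2.1 S
      refine ⟨by omega, ?_, ?_⟩
      · intro H
        rcases ltNode_snoc H with ⟨rfl, -, -⟩ | ⟨-, h2, -⟩ | ⟨hNe, T1⟩ | ⟨-, -, h2, -⟩
        · omega
        · omega
        · have n1 := (ihv i₁ i₂ ℓ ℓ' hℓ1 hℓ2 hℓ'1 hℓ'2).2.1 T1
          have n2 := (ihv i₁ i₂ ℓ a hℓ1 hℓ2 ha1 haq).2.2 T1 S
          omega
        · omega
      · intro H1 H2
        rcases ltNode_snoc H2 with ⟨-, h2, -⟩ | ⟨-, h2, -⟩ | ⟨hNe', T2⟩ | ⟨hNe', hveq2, -, -⟩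
        · omega
        · omega
        · rcases ltNode_snoc H1 with ⟨rfl, -, -⟩ | ⟨-, h2, -⟩ | ⟨hNe, T1⟩ | ⟨-, -, h2, -⟩
          · have k1 := (ihv i₂ i₁ ℓ' ℓ hℓ'1 hℓ'2 hℓ1 hℓ2).2.1 T2
            omega
          · omega
          · have n3 := (ihv i₁ i₂ ℓ ℓ' hℓ1 hℓ2 hℓ'1 hℓ'2).2.2 T1 T2
            omega
          · omega
        · rw [hveq2] at S; exact absurd S (ltNode_irrefl _ _ _)
  · -- e₁ = 2, e₂ = 2
    simp only [key22]
    refine ⟨P1a, ?_, ?_⟩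
    · intro H
      rcases ltNode_snoc H with ⟨-, -, h3⟩ | ⟨rfl, -, T⟩ | ⟨-, T⟩ | ⟨-, -, h2, -⟩
      · omega
      · exact (ihv i₁ i₂ ℓ ℓ' hℓ1 hℓ2 hℓ'1 hℓ'2).2.1 T
      · exact (ihv i₁ i₂ ℓ ℓ' hℓ1 hℓ2 hℓ'1 hℓ'2).2.1 T
      · omega
    · intro H1 H2
      have T1 : ltNode lab ℓ (v i₁) (v i₂) := by
        rcases ltNode_snoc H1 with ⟨-, -, h3⟩ | ⟨rfl, -, T⟩ | ⟨-, T⟩ | ⟨-, -, h2, -⟩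
        · omega
        · exact T
        · exact T
        · omega
      have T2 : ltNode lab ℓ' (v i₂) (v i₁) := by
        rcases ltNode_snoc H2 with ⟨-, -, h3⟩ | ⟨rfl, -, T⟩ | ⟨-, T⟩ | ⟨-, -, h2, -⟩
        · omega
        · exact T
        · exact T
        · omega
      exact (ihv i₁ i₂ ℓ ℓ' hℓ1 hℓ2 hℓ'1 hℓ'2).2.2 T1 T2

lemma step_inv {q d : ℕ} {lab : Fin d → ℕ} {v : Fin (d + 1) → Fin d → ℕ} {a : ℕ}
    (ha1 : 1 ≤ a) (haq : a ≤ q)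
    (hsort : ∀ i j : Fin (d + 1), i < j → ltNode lab a (v i) (v j))
    (ihv : SpInv q lab v)
    {h : ℕ} (hh2 : h ≤ d + 1)
    (w : Fin (d + 2) → Fin (d + 1) → ℕ)
    (hw1 : ∀ (j : Fin (d + 2)) (hj : (j : ℕ) < h),
      w j = Fin.snoc (v ⟨(j : ℕ), by omega⟩) 1)
    (hw2 : ∀ (j : Fin (d + 2)) (hj : ¬ (j : ℕ) < h),
      w j = Fin.snoc (v ⟨(j : ℕ) - 1, by have := j.isLt; omega⟩) 2) :
    SpInv q (Fin.snoc lab a) w := by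
  intro j₁ j₂ ℓ ℓ' hℓ1 hℓ2 hℓ'1 hℓ'2
  by_cases hj1 : (j₁ : ℕ) < h <;> by_cases hj2 : (j₂ : ℕ) < h
  · rw [hw1 j₁ hj1, hw1 j₂ hj2]
    exact step_core ha1 haq ihv _ _ 1 1 (Or.inl rfl) (Or.inl rfl)
      (fun _ hc => absurd hc (by norm_num)) (fun hc _ => absurd hc (by norm_num))
      ℓ ℓ' hℓ1 hℓ2 hℓ'1 hℓ'2
  · rw [hw1 j₁ hj1, hw2 j₂ hj2]
    refine step_core ha1 haq ihv ⟨(j₁ : ℕ), by omega⟩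
      ⟨(j₂ : ℕ) - 1, by have := j₂.isLt; omega⟩ 1 2 (Or.inl rfl) (Or.inr rfl)
      ?_ (fun hc _ => absurd hc (by norm_num)) ℓ ℓ' hℓ1 hℓ2 hℓ'1 hℓ'2
    intro _ _
    rcases Nat.lt_or_ge (j₁ : ℕ) ((j₂ : ℕ) - 1) with hlt | hge
    · exact Or.inr (hsort _ _ hlt)
    · exact Or.inl (congrArg v (Fin.ext (show (j₁ : ℕ) = (j₂ : ℕ) - 1 by omega)))
  · rw [hw2 j₁ hj1, hw1 j₂ hj2]
    refine step_core ha1 haq ihv ⟨(j₁ : ℕ) - 1, by have := j₁.isLt; omega⟩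
      ⟨(j₂ : ℕ), by omega⟩ 2 1 (Or.inr rfl) (Or.inl rfl)
      (fun hc _ => absurd hc (by norm_num)) ?_ ℓ ℓ' hℓ1 hℓ2 hℓ'1 hℓ'2
    intro _ _
    rcases Nat.lt_or_ge (j₂ : ℕ) ((j₁ : ℕ) - 1) with hlt | hge
    · exact Or.inr (hsort _ _ hlt)
    · exact Or.inl (congrArg v (Fin.ext (show (j₁ : ℕ) - 1 = (j₂ : ℕ) by omega)))
  · rw [hw2 j₁ hj1, hw2 j₂ hj2]
    exact step_core ha1 haq ihv _ _ 2 2 (Or.inr rfl) (Or.inr rfl)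
      (fun hc _ => absurd hc (by norm_num)) (fun _ hc => absurd hc (by norm_num))
      ℓ ℓ' hℓ1 hℓ2 hℓ'1 hℓ'2

lemma base_inv {q : ℕ} (ℓ₀ : ℕ) :
    SpInv q (fun _ : Fin 1 => ℓ₀) ![![(1 : ℕ)], ![(2 : ℕ)]] := by
  have hA : ∀ (b : ℕ) (x : Fin 1 → ℕ),
      aCount (fun _ : Fin 1 => ℓ₀) b x = if ℓ₀ = b ∧ x 0 = 2 then 1 else 0 := by
    intro b x
    rw [aCount, Finset.card_filter, Fin.sum_univ_one]
  have hLT : ∀ (b : ℕ) (x y : Fin 1 → ℕ), ltNode (fun _ : Fin 1 => ℓ₀) b x y →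
      (ℓ₀ = b ∧ x 0 = 2 ∧ y 0 = 1) ∨ (ℓ₀ ≠ b ∧ x 0 = 1 ∧ y 0 = 2) := by
    rintro b x y (⟨k₀, hk1, hk2, hk3, -⟩ | ⟨-, k₀, hk1, hk2, hk3, -⟩) <;>
      have hk0 : k₀ = 0 := Subsingleton.elim _ _ <;> rw [hk0] at hk2 hk3
    · exact Or.inl ⟨hk1, hk2, hk3⟩
    · exact Or.inr ⟨hk1, hk2, hk3⟩
  have hcomp1 : ∀ b : ℕ, aCount (fun _ : Fin 1 => ℓ₀) b ![(1 : ℕ)] = 0 := by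
    intro b; rw [hA]; simp
  have e3 : ∀ b : ℕ, (aCount (fun _ : Fin 1 => ℓ₀) b ![(2 : ℕ)] = 1 ∧ ℓ₀ = b) ∨
      (aCount (fun _ : Fin 1 => ℓ₀) b ![(2 : ℕ)] = 0 ∧ ¬ ℓ₀ = b) := by
    intro b; rw [hA]; by_cases hh : ℓ₀ = b <;> simp [hh]
  have hx1 : (![(1 : ℕ)] : Fin 1 → ℕ) 0 = 1 := rfl
  have hx2 : (![(2 : ℕ)] : Fin 1 → ℕ) 0 = 2 := rfl
  intro i j ℓ ℓ' hℓ1 hℓ2 hℓ'1 hℓ'2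
  have c1 := hcomp1 ℓ
  have c2 := hcomp1 ℓ'
  have c3 := e3 ℓ
  have c4 := e3 ℓ'
  fin_cases i <;> fin_cases j <;>
    simp only [Matrix.cons_val_zero, Matrix.cons_val_one, Matrix.head_cons, Fin.mk_zero,
      Fin.mk_one, Fin.isValue]
  · exact ⟨by omega, fun H => absurd H (ltNode_irrefl _ _ _),
      fun H _ => absurd H (ltNode_irrefl _ _ _)⟩
  · refine ⟨by omega, ?_, ?_⟩
    · intro H
      rcases hLT _ _ _ H with ⟨f1, f2, f3⟩ | ⟨f1, f2, f3⟩ <;> omega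
    · intro H1 H2
      rcases hLT _ _ _ H1 with ⟨f1, f2, f3⟩ | ⟨f1, f2, f3⟩ <;>
        rcases hLT _ _ _ H2 with ⟨g1, g2, g3⟩ | ⟨g1, g2, g3⟩ <;> omega
  · refine ⟨by omega, ?_, ?_⟩
    · intro H
      rcases hLT _ _ _ H with ⟨f1, f2, f3⟩ | ⟨f1, f2, f3⟩ <;> omega
    · intro H1 H2
      rcases hLT _ _ _ H1 with ⟨f1, f2, f3⟩ | ⟨f1, f2, f3⟩ <;>
        rcases hLT _ _ _ H2 with ⟨g1, g2, g3⟩ | ⟨g1, g2, g3⟩ <;> omega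
  · exact ⟨by omega, fun H => absurd H (ltNode_irrefl _ _ _),
      fun H _ => absurd H (ltNode_irrefl _ _ _)⟩

theorem inv_of_constructible {q d : ℕ} {lab : Fin d → ℕ} {u : Fin (d + 1) → Fin d → ℕ}
    (hR : Constructible q d lab u) : SpInv q lab u := by
  induction hR with
  | base ℓ₀ h1 hq => exact base_inv ℓ₀
  | @step d' lab' u' hR a h1 hq v σ hv hsort h hh1 hh2 ih =>
      have ihv : SpInv q lab' v := by
        intro i j ℓ ℓ' a1 a2 a3 a4
        rw [hv i, hv j]
        exact ih (σ i) (σ j) ℓ ℓ' a1 a2 a3 a4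
      exact step_inv h1 hq hsort ihv hh2 _
        (fun j hj => by simp only [dif_pos hj])
        (fun j hj => by simp only [dif_neg hj])

/-- For a constructible special point data with tuples listed in increasing lexicographic
order and `b_j = ⌈(|a_{u_j}(R)| + c)/q − 1/2⌉`, there are indices `h_min, h_max` at which
`a^ℓ_{u_j}(R) − b_j` is minimal resp. maximal simultaneously for all node labels `ℓ`;
in particular the minimum and maximum of
`F(j_1,…,j_q) = Σ_{ℓ=1}^q (a^ℓ_{u_{j_ℓ}}(R) − b_{j_ℓ})` are attained at the constant
functions. -/
theorem constructible_min_max {q d : ℕ} (hq : 1 ≤ q) (hd : 1 ≤ d)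
    {lab : Fin d → ℕ} {u : Fin (d + 1) → Fin d → ℕ}
    (hR : Constructible q d lab u)
    (hlex : ∀ i j : Fin (d + 1), i < j → lexLt (u i) (u j))
    (c : ℚ) (b : Fin (d + 1) → ℤ)
    (hb : ∀ j : Fin (d + 1), b j = ⌈((aTot (u j) : ℚ) + c) / (q : ℚ) - 1 / 2⌉) :
    ∃ hmin hmax : Fin (d + 1),
      (∀ ℓ : ℕ, 1 ≤ ℓ → ℓ ≤ q → ∀ j : Fin (d + 1),
        (aCount lab ℓ (u hmin) : ℤ) - b hmin ≤ (aCount lab ℓ (u j) : ℤ) - b j ∧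
        (aCount lab ℓ (u j) : ℤ) - b j ≤ (aCount lab ℓ (u hmax) : ℤ) - b hmax) ∧
      (∀ j : ℕ → Fin (d + 1),
        (∑ ℓ ∈ Finset.Icc 1 q, ((aCount lab ℓ (u hmin) : ℤ) - b hmin)) ≤
          (∑ ℓ ∈ Finset.Icc 1 q, ((aCount lab ℓ (u (j ℓ)) : ℤ) - b (j ℓ))) ∧
        (∑ ℓ ∈ Finset.Icc 1 q, ((aCount lab ℓ (u (j ℓ)) : ℤ) - b (j ℓ))) ≤
          (∑ ℓ ∈ Finset.Icc 1 q, ((aCount lab ℓ (u hmax) : ℤ) - b hmax))) := by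
  have INV := inv_of_constructible hR
  set g : Fin (d + 1) → ℤ :=
    fun j => ∑ ℓ ∈ Finset.Icc 1 q, ((aCount lab ℓ (u j) : ℤ) - b j) with hg
  obtain ⟨hmin, -, hminp⟩ :=
    Finset.exists_min_image (Finset.univ : Finset (Fin (d + 1))) g ⟨0, Finset.mem_univ 0⟩
  obtain ⟨hmax, -, hmaxp⟩ :=
    Finset.exists_max_image (Finset.univ : Finset (Fin (d + 1))) g ⟨0, Finset.mem_univ 0⟩
  have main : ∀ ℓ : ℕ, 1 ≤ ℓ → ℓ ≤ q → ∀ j : Fin (d + 1),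
      (aCount lab ℓ (u hmin) : ℤ) - b hmin ≤ (aCount lab ℓ (u j) : ℤ) - b j ∧
      (aCount lab ℓ (u j) : ℤ) - b j ≤ (aCount lab ℓ (u hmax) : ℤ) - b hmax := by
    intro ℓ hl1 hl2 j
    constructor
    · by_contra hcon
      push_neg at hcon
      have key : ∀ ℓ' ∈ Finset.Icc 1 q,
          (aCount lab ℓ' (u j) : ℤ) - b j ≤ (aCount lab ℓ' (u hmin) : ℤ) - b hmin := by
        intro ℓ' hmem
        rw [Finset.mem_Icc] at hmem
        have := (INV j hmin ℓ' ℓ hmem.1 hmem.2 hl1 hl2).1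
        omega
      have hstrict : g j < g hmin := by
        rw [hg]
        refine Finset.sum_lt_sum key ⟨ℓ, Finset.mem_Icc.mpr ⟨hl1, hl2⟩, by omega⟩
      exact absurd (hminp j (Finset.mem_univ j)) (by omega)
    · by_contra hcon
      push_neg at hcon
      have key : ∀ ℓ' ∈ Finset.Icc 1 q,
          (aCount lab ℓ' (u hmax) : ℤ) - b hmax ≤ (aCount lab ℓ' (u j) : ℤ) - b j := by
        intro ℓ' hmem
        rw [Finset.mem_Icc] at hmem
        have := (INV hmax j ℓ' ℓ hmem.1 hmem.2 hl1 hl2).1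
        omega
      have hstrict : g hmax < g j := by
        rw [hg]
        refine Finset.sum_lt_sum key ⟨ℓ, Finset.mem_Icc.mpr ⟨hl1, hl2⟩, by omega⟩
      exact absurd (hmaxp j (Finset.mem_univ j)) (by omega)
  refine ⟨hmin, hmax, main, ?_⟩
  intro jf
  constructor
  · refine Finset.sum_le_sum ?_
    intro ℓ hmem
    rw [Finset.mem_Icc] at hmem
    exact (main ℓ hmem.1 hmem.2 (jf ℓ)).1
  · refine Finset.sum_le_sum ?_
    intro ℓ hmem
    rw [Finset.mem_Icc] at hmem
    exact (main ℓ hmem.1 hmem.2 (jf ℓ)).2
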